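/- For every n ≥ 3 and each pattern p ∈ {(AB)^ω, (BA)^ω, (ABBA)^ω, (BAAB)^ω}, there exists a length-n factor x of the Thue-Morse word whose intertwining sequence I(x) equals p. -/
import Mathlib


open scoped Classical

/-- The Thue-Morse word: parity of the binary digit sum. -/
def tm (n : ℕ) : ℕ := (Nat.digits 2 n).sum % 2

/-- `t[j..j+n-1] = t[i..i+n-1]` : an occurrence at `j` of the factor `t[i..i+n-1]`. -/
def feq (i j n : ℕ) : Prop := ∀ k < n, tm (j + k) = tm (i + k)

/-- `t[j..j+n-1]` is the binary complement of `t[i..i+n-1]`. -/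
def feqc (i j n : ℕ) : Prop := ∀ k < n, tm (j + k) = 1 - tm (i + k)

/-- Positions of occurrences of `x = t[i..i+n-1]` or its complement. -/
def occSet (i n : ℕ) : ℕ → Prop := fun j => feq i j n ∨ feqc i j n

/-- The intertwining sequence of `x = t[i..i+n-1]`: at index `m`, the label of the
`m`-th (in increasing order of position) occurrence of `x` or its complement;
`0` codes `A` (an occurrence of `x`), `1` codes `B` (an occurrence of the complement). -/
noncomputable def itw (i n m : ℕ) : ℕ :=
  if feq i (Nat.nth (occSet i n) m) n then 0 else 1

/-- The intertwining sequence is `(AB)^ω`. -/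
def ABpat (i n : ℕ) : Prop := ∀ m, itw i n m = m % 2

/-- The intertwining sequence is `(BA)^ω`. -/
def BApat (i n : ℕ) : Prop := ∀ m, itw i n m = (m + 1) % 2

/-- The intertwining sequence is `(ABBA)^ω`. -/
def ABBApat (i n : ℕ) : Prop :=
  ∀ m, itw i n m = if m % 4 = 0 ∨ m % 4 = 3 then 0 else 1

/-- The intertwining sequence is `(BAAB)^ω`. -/
def BAABpat (i n : ℕ) : Prop :=
  ∀ m, itw i n m = if m % 4 = 0 ∨ m % 4 = 3 then 1 else 0

/-- The length-`n` factor of the Thue-Morse word starting at position `i`, as a word. -/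
def fac (i n : ℕ) : List ℕ := (List.range n).map (fun k => tm (i + k))

/-! ### Basic facts about the Thue-Morse sequence -/

lemma tm_le_one (n : ℕ) : tm n ≤ 1 := by
  have := Nat.mod_lt ((Nat.digits 2 n).sum) (show 0 < 2 by norm_num)
  unfold tm; omega

lemma tm_even (n : ℕ) : tm (2 * n) = tm n := by
  rcases Nat.eq_zero_or_pos n with h | h
  · subst h; rfl
  · unfold tm
    rw [Nat.digits_def' (by norm_num : 1 < 2) (by omega)]
    simp [Nat.mul_div_cancel_left _ (show 0 < 2 by norm_num), Nat.mul_mod_right]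

lemma tm_odd (n : ℕ) : tm (2 * n + 1) = 1 - tm n := by
  unfold tm
  rw [Nat.digits_def' (by norm_num : 1 < 2) (by omega)]
  have h1 : (2 * n + 1) % 2 = 1 := by omega
  have h2 : (2 * n + 1) / 2 = n := by omega
  rw [h1, h2]
  simp only [List.sum_cons]
  omega

/-- The period-doubling predicate: positions where Thue-Morse changes value. -/
def P (s : ℕ) : Prop := tm s ≠ tm (s + 1)

/-- The complement of `P`. -/
def Pb (s : ℕ) : Prop := ¬ P s

/-- Occurrence set of the factors `011`/`100` (shifted): doubled `P`. -/
def S1 : ℕ → Prop := fun j => ∃ s, j = 2 * s ∧ P s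

/-- Occurrence set of the factors `101`/`010`. -/
def S2 : ℕ → Prop := fun j => Pb (j / 2)

/-- Occurrence set of the factors `0011`/`1100`. -/
def S3 : ℕ → Prop := fun j => ∃ x, j = 2 * x + 1 ∧ S2 x

lemma P_even (s : ℕ) : P (2 * s) := by
  have h1 := tm_even s
  have h2 := tm_odd s
  have h3 := tm_le_one s
  unfold P
  omega

lemma P_odd (s : ℕ) : P (2 * s + 1) ↔ ¬ P s := by
  have h1 := tm_odd s
  have h2 : tm (2 * s + 1 + 1) = tm (s + 1) := by
    rw [show 2 * s + 1 + 1 = 2 * (s + 1) from by ring, tm_even]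
  have h3 := tm_le_one s
  have h4 := tm_le_one (s + 1)
  unfold P
  omega

lemma no3 (m : ℕ) (h1 : tm m = tm (m + 1)) (h2 : tm (m + 1) = tm (m + 2)) : False := by
  rcases Nat.even_or_odd m with ⟨s, hs⟩ | ⟨s, hs⟩
  · have := P_even s; unfold P at this
    rw [show m = 2 * s from by omega] at h1; omega
  · have := P_even (s + 1)
    unfold P at this
    have e1 : m + 1 = 2 * (s + 1) := by omega
    have e2 : m + 2 = 2 * (s + 1) + 1 := by omega
    rw [e1, e2] at h2
    exact this h2

lemma notP_odd {s : ℕ} (h : ¬ P s) : s % 2 = 1 := by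
  by_contra hc
  exact h (by have e : s = 2 * (s / 2) := by omega
              rw [e]; exact P_even _)

lemma notP_4 (u : ℕ) : ¬ P (4 * u + 1) := by
  have := (P_odd (2 * u)).mp
  have h2 := P_even u
  rw [show 2 * (2 * u) + 1 = 4 * u + 1 from by ring] at this
  tauto

/-! ### A bespoke counting function (classical, instance-free) -/

/-- Number of `j < x` with `p j`. -/
noncomputable def cnt (p : ℕ → Prop) : ℕ → ℕ
  | 0 => 0
  | x + 1 => cnt p x + if p x then 1 else 0

lemma cnt_succ (p : ℕ → Prop) (x : ℕ) : cnt p (x + 1) = cnt p x + if p x then 1 else 0 := rfl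

lemma cnt_eq_count (p : ℕ → Prop) [DecidablePred p] (x : ℕ) : cnt p x = Nat.count p x := by
  induction x with
  | zero => simp [cnt]
  | succ x ih =>
    rw [cnt_succ, Nat.count_succ, ih]
    by_cases h : p x
    · rw [if_pos h, if_pos h]
    · rw [if_neg h, if_neg h]

lemma cnt_le (p : ℕ → Prop) (x : ℕ) : cnt p x ≤ x := by
  induction x with
  | zero => simp [cnt]
  | succ x ih =>
    rw [cnt_succ]
    by_cases h : p x
    · rw [if_pos h]; omega
    · rw [if_neg h]; omega

lemma cnt_Pb (x : ℕ) : cnt Pb x = x - cnt P x := by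
  induction x with
  | zero => simp [cnt]
  | succ x ih =>
    have hle := cnt_le P x
    rw [cnt_succ, cnt_succ, ih]
    by_cases h : P x
    · rw [if_pos h, if_neg (show ¬ Pb x from not_not_intro h)]; omega
    · rw [if_neg h, if_pos (show Pb x from h)]; omega

/-- tm equals the parity of the count of `P` below. -/
lemma tm_eq_cnt (s : ℕ) : tm s = cnt P s % 2 := by
  induction s with
  | zero => simp [tm, cnt]
  | succ s ih =>
    rw [cnt_succ]
    have h3 := tm_le_one s
    have h4 := tm_le_one (s + 1)
    by_cases h : P s
    · rw [if_pos h]; unfold P at h; omega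
    · rw [if_neg h]; unfold P at h; omega

/-! ### Characterization of joint occurrences via the P profile -/

lemma occ_P {i n : ℕ} (hn : 0 < n) (j : ℕ) :
    occSet i n j ↔ ((tm j = tm i ∨ tm j + tm i = 1) ∧
      ∀ k, k + 1 < n → (P (j + k) ↔ P (i + k))) := by
  constructor
  · rintro (h | h)
    · refine ⟨Or.inl (by simpa using h 0 hn), fun k hk => ?_⟩
      have h1 := h k (by omega)
      have h2 := h (k + 1) (by omega)
      unfold P
      rw [show j + k + 1 = j + (k + 1) from by ring, show i + k + 1 = i + (k + 1) from by ring,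
        h1, h2]
    · have hb := tm_le_one i
      have hb2 := tm_le_one j
      refine ⟨Or.inr (by have := h 0 hn; simp at this; omega), fun k hk => ?_⟩
      have h1 := h k (by omega)
      have h2 := h (k + 1) (by omega)
      have b1 := tm_le_one (i + k)
      have b2 := tm_le_one (i + (k + 1))
      unfold P
      rw [show j + k + 1 = j + (k + 1) from by ring, show i + k + 1 = i + (k + 1) from by ring,
        h1, h2]
      omega
  · rintro ⟨h0, hP⟩
    rcases h0 with h0 | h0
    · left
      intro k hk
      induction k with
      | zero => simpa using h0
      | succ k ih =>
        have e1 := ih (by omega)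
        have e2 := hP k (by omega)
        unfold P at e2
        have b1 := tm_le_one (j + k)
        have b2 := tm_le_one (i + k)
        have b3 := tm_le_one (j + (k + 1))
        have b4 := tm_le_one (i + (k + 1))
        rw [show j + k + 1 = j + (k + 1) from by ring, show i + k + 1 = i + (k + 1) from by ring]
          at e2
        omega
    · right
      have key : ∀ k, k < n → tm (j + k) + tm (i + k) = 1 := by
        intro k hk
        induction k with
        | zero => simpa using h0
        | succ k ih =>
          have e1 := ih (by omega)
          have e2 := hP k (by omega)
          unfold P at e2
          have b1 := tm_le_one (j + k)
          have b2 := tm_le_one (i + k)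
          have b3 := tm_le_one (j + (k + 1))
          have b4 := tm_le_one (i + (k + 1))
          rw [show j + k + 1 = j + (k + 1) from by ring,
            show i + k + 1 = i + (k + 1) from by ring] at e2
          omega
      intro k hk
      have := key k hk
      omega

lemma occ_disjoint {i n j : ℕ} (hn : 0 < n) (h1 : feq i j n) (h2 : feqc i j n) : False := by
  have a1 := h1 0 hn
  have a2 := h2 0 hn
  have := tm_le_one (i + 0)
  omega

lemma occ_label {i n j : ℕ} (hn : 0 < n) (h : occSet i n j) :
    (feq i j n ↔ tm j = tm i) := by
  rcases h with h | h
  · exact ⟨fun _ => by simpa using h 0 hn, fun _ => h⟩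
  · constructor
    · intro h'; exact (occ_disjoint hn h' h).elim
    · intro h'
      have h1 := h 0 hn
      have h2 := tm_le_one (i + 0)
      simp only [Nat.add_zero] at h1 h2
      omega

/-- Master lemma: to compute the intertwining sequence it suffices to identify the
occurrence set exactly and to know the label of each occurrence as a function of
its index within the set. -/
lemma master {i n : ℕ} (g : ℕ → ℕ) (hn : 0 < n) (q : ℕ → Prop)
    (hq : occSet i n = q) (hinf : (setOf q).Infinite)
    (h : ∀ j, q j → (if tm j = tm i then 0 else 1) = g (cnt q j)) :
    ∀ m, itw i n m = g m := by
  intro m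
  unfold itw
  rw [hq]
  have hmem : q (Nat.nth q m) := Nat.nth_mem_of_infinite hinf m
  have hlab : feq i (Nat.nth q m) n ↔ tm (Nat.nth q m) = tm i := by
    apply occ_label hn
    rw [hq]; exact hmem
  rw [if_congr hlab rfl rfl, h _ hmem, cnt_eq_count, Nat.count_nth_of_infinite hinf]

/-! ### Doubling lemmas -/

lemma feq_double {i j n : ℕ} : feq (2 * i) (2 * j) (2 * n) ↔ feq i j n := by
  constructor
  · intro h a ha
    have := h (2 * a) (by omega)
    rw [show 2 * j + 2 * a = 2 * (j + a) from by ring,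
      show 2 * i + 2 * a = 2 * (i + a) from by ring, tm_even, tm_even] at this
    exact this
  · intro h k hk
    rcases Nat.even_or_odd k with ⟨a, hk2⟩ | ⟨a, hk2⟩
    · rw [show 2 * j + k = 2 * (j + a) from by omega,
        show 2 * i + k = 2 * (i + a) from by omega, tm_even, tm_even]
      exact h a (by omega)
    · rw [show 2 * j + k = 2 * (j + a) + 1 from by omega,
        show 2 * i + k = 2 * (i + a) + 1 from by omega, tm_odd, tm_odd, h a (by omega)]

lemma feqc_double {i j n : ℕ} : feqc (2 * i) (2 * j) (2 * n) ↔ feqc i j n := by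
  constructor
  · intro h a ha
    have := h (2 * a) (by omega)
    rw [show 2 * j + 2 * a = 2 * (j + a) from by ring,
      show 2 * i + 2 * a = 2 * (i + a) from by ring, tm_even, tm_even] at this
    exact this
  · intro h k hk
    rcases Nat.even_or_odd k with ⟨a, hk2⟩ | ⟨a, hk2⟩
    · rw [show 2 * j + k = 2 * (j + a) from by omega,
        show 2 * i + k = 2 * (i + a) from by omega, tm_even, tm_even]
      exact h a (by omega)
    · have hb := tm_le_one (i + a)
      have := h a (by omega)
      rw [show 2 * j + k = 2 * (j + a) + 1 from by omega,
        show 2 * i + k = 2 * (i + a) + 1 from by omega, tm_odd, tm_odd, this]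

lemma feq_double' {i j n : ℕ} : feq (2 * i) (2 * j) (2 * n + 1) ↔ feq i j (n + 1) := by
  constructor
  · intro h a ha
    have := h (2 * a) (by omega)
    rw [show 2 * j + 2 * a = 2 * (j + a) from by ring,
      show 2 * i + 2 * a = 2 * (i + a) from by ring, tm_even, tm_even] at this
    exact this
  · intro h k hk
    rcases Nat.even_or_odd k with ⟨a, hk2⟩ | ⟨a, hk2⟩
    · rw [show 2 * j + k = 2 * (j + a) from by omega,
        show 2 * i + k = 2 * (i + a) from by omega, tm_even, tm_even]
      exact h a (by omega)
    · rw [show 2 * j + k = 2 * (j + a) + 1 from by omega,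
        show 2 * i + k = 2 * (i + a) + 1 from by omega, tm_odd, tm_odd, h a (by omega)]

lemma feqc_double' {i j n : ℕ} : feqc (2 * i) (2 * j) (2 * n + 1) ↔ feqc i j (n + 1) := by
  constructor
  · intro h a ha
    have := h (2 * a) (by omega)
    rw [show 2 * j + 2 * a = 2 * (j + a) from by ring,
      show 2 * i + 2 * a = 2 * (i + a) from by ring, tm_even, tm_even] at this
    exact this
  · intro h k hk
    rcases Nat.even_or_odd k with ⟨a, hk2⟩ | ⟨a, hk2⟩
    · rw [show 2 * j + k = 2 * (j + a) from by omega,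
        show 2 * i + k = 2 * (i + a) from by omega, tm_even, tm_even]
      exact h a (by omega)
    · have hb := tm_le_one (i + a)
      have := h a (by omega)
      rw [show 2 * j + k = 2 * (j + a) + 1 from by omega,
        show 2 * i + k = 2 * (i + a) + 1 from by omega, tm_odd, tm_odd, this]

/-- An even-length factor at an even position only occurs (up to complement)
at even positions. -/
lemma occ_parity {i n j : ℕ} (hn : 2 ≤ n) (h : occSet (2 * i) (2 * n) j) : j % 2 = 0 := by
  by_contra hc
  obtain ⟨s, rfl⟩ : ∃ s, j = 2 * s + 1 := ⟨j / 2, by omega⟩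
  have key : tm s = tm (s + 1) ∧ tm (s + 1) = tm (s + 1 + 1) := by
    rcases h with h | h
    · have A : ∀ a, a < n → tm (s + a) + tm (i + a) = 1 := by
        intro a ha
        have := h (2 * a) (by omega)
        rw [show 2 * s + 1 + 2 * a = 2 * (s + a) + 1 from by ring,
          show 2 * i + 2 * a = 2 * (i + a) from by ring, tm_odd, tm_even] at this
        have := tm_le_one (s + a); have := tm_le_one (i + a); omega
      have B : ∀ a, a < n → tm (s + a + 1) + tm (i + a) = 1 := by
        intro a ha
        have := h (2 * a + 1) (by omega)
        rw [show 2 * s + 1 + (2 * a + 1) = 2 * (s + a + 1) from by ring,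
          show 2 * i + (2 * a + 1) = 2 * (i + a) + 1 from by ring, tm_odd, tm_even] at this
        have := tm_le_one (s + a + 1); have := tm_le_one (i + a); omega
      have a0 := A 0 (by omega); have b0 := B 0 (by omega)
      have a1 := A 1 (by omega); have b1 := B 1 (by omega)
      simp only [Nat.add_zero] at a0 b0
      constructor <;> omega
    · have A : ∀ a, a < n → tm (s + a) = tm (i + a) := by
        intro a ha
        have := h (2 * a) (by omega)
        rw [show 2 * s + 1 + 2 * a = 2 * (s + a) + 1 from by ring,
          show 2 * i + 2 * a = 2 * (i + a) from by ring, tm_odd, tm_even] at this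
        have := tm_le_one (s + a); have := tm_le_one (i + a); omega
      have B : ∀ a, a < n → tm (s + a + 1) = tm (i + a) := by
        intro a ha
        have := h (2 * a + 1) (by omega)
        rw [show 2 * s + 1 + (2 * a + 1) = 2 * (s + a + 1) from by ring,
          show 2 * i + (2 * a + 1) = 2 * (i + a) + 1 from by ring, tm_odd, tm_even] at this
        have := tm_le_one (s + a + 1); have := tm_le_one (i + a); omega
      have a0 := A 0 (by omega); have b0 := B 0 (by omega)
      have a1 := A 1 (by omega); have b1 := B 1 (by omega)
      simp only [Nat.add_zero] at a0 b0
      constructor <;> omega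
  exact no3 s key.1 key.2

lemma occ_parity' {i n j : ℕ} (hn : 2 ≤ n) (h : occSet (2 * i) (2 * n + 1) j) : j % 2 = 0 := by
  apply occ_parity hn
  rcases h with h | h
  · exact Or.inl (fun k hk => h k (by omega))
  · exact Or.inr (fun k hk => h k (by omega))

lemma occ_double {i n : ℕ} (hn : 2 ≤ n) :
    occSet (2 * i) (2 * n) = fun j => ∃ s, j = 2 * s ∧ occSet i n s := by
  funext j
  apply propext
  constructor
  · intro h
    have hp := occ_parity hn h
    refine ⟨j / 2, by omega, ?_⟩
    rw [show j = 2 * (j / 2) from by omega] at h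
    rcases h with h | h
    · exact Or.inl (feq_double.mp h)
    · exact Or.inr (feqc_double.mp h)
  · rintro ⟨s, rfl, h | h⟩
    · exact Or.inl (feq_double.mpr h)
    · exact Or.inr (feqc_double.mpr h)

lemma occ_double' {i n : ℕ} (hn : 2 ≤ n) :
    occSet (2 * i) (2 * n + 1) = fun j => ∃ s, j = 2 * s ∧ occSet i (n + 1) s := by
  funext j
  apply propext
  constructor
  · intro h
    have hp := occ_parity' hn h
    refine ⟨j / 2, by omega, ?_⟩
    rw [show j = 2 * (j / 2) from by omega] at h
    rcases h with h | h
    · exact Or.inl (feq_double'.mp h)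
    · exact Or.inr (feqc_double'.mp h)
  · rintro ⟨s, rfl, h | h⟩
    · exact Or.inl (feq_double'.mpr h)
    · exact Or.inr (feqc_double'.mpr h)


/-! ### Counting in structured sets -/

lemma cnt_double (p : ℕ → Prop) (x : ℕ) :
    cnt (fun j => ∃ s, j = 2 * s ∧ p s) (2 * x) = cnt p x := by
  induction x with
  | zero => simp [cnt]
  | succ x ih =>
    rw [show 2 * (x + 1) = 2 * x + 1 + 1 from by ring, cnt_succ, cnt_succ, cnt_succ, ih]
    have h1 : ¬ ∃ s, 2 * x + 1 = 2 * s ∧ p s := by rintro ⟨s, hs, _⟩; omega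
    rw [if_neg h1]
    by_cases h : p x
    · rw [if_pos (show ∃ s, 2 * x = 2 * s ∧ p s from ⟨x, rfl, h⟩), if_pos h]
    · rw [if_neg (show ¬ ∃ s, 2 * x = 2 * s ∧ p s from by
        rintro ⟨s, hs, hps⟩; exact h (by rwa [show s = x from by omega] at hps)), if_neg h]

lemma cnt_odd (p : ℕ → Prop) (x : ℕ) :
    cnt (fun j => ∃ s, j = 2 * s + 1 ∧ p s) (2 * x + 1) = cnt p x := by
  induction x with
  | zero =>
    rw [show 2 * 0 + 1 = 0 + 1 from rfl, cnt_succ,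
      if_neg (show ¬ ∃ s, 0 = 2 * s + 1 ∧ p s from by rintro ⟨s, hs, _⟩; omega)]
    simp [cnt]
  | succ x ih =>
    rw [show 2 * (x + 1) + 1 = 2 * x + 1 + 1 + 1 from by ring, cnt_succ, cnt_succ, ih, cnt_succ]
    have h1 : ¬ ∃ s, 2 * x + 1 + 1 = 2 * s + 1 ∧ p s := by rintro ⟨s, hs, _⟩; omega
    rw [if_neg h1]
    by_cases h : p x
    · rw [if_pos (show ∃ s, 2 * x + 1 = 2 * s + 1 ∧ p s from ⟨x, rfl, h⟩), if_pos h]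
    · rw [if_neg (show ¬ ∃ s, 2 * x + 1 = 2 * s + 1 ∧ p s from by
        rintro ⟨s, hs, hps⟩; exact h (by rwa [show s = x from by omega] at hps)), if_neg h]

lemma cnt_half (p : ℕ → Prop) (x : ℕ) :
    cnt (fun j => p (j / 2)) (2 * x) = 2 * cnt p x := by
  induction x with
  | zero => simp [cnt]
  | succ x ih =>
    rw [show 2 * (x + 1) = 2 * x + 1 + 1 from by ring, cnt_succ, cnt_succ, ih, cnt_succ]
    have e1 : (2 * x + 1) / 2 = x := by omega
    have e2 : (2 * x) / 2 = x := by omega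
    simp only [e1, e2]
    by_cases h : p x
    · simp only [if_pos h]; omega
    · simp only [if_neg h]; omega

lemma cnt_half_odd (p : ℕ → Prop) (x : ℕ) :
    cnt (fun j => p (j / 2)) (2 * x + 1) = 2 * cnt p x + if p x then 1 else 0 := by
  rw [cnt_succ, cnt_half]
  have e2 : (2 * x) / 2 = x := by omega
  simp only [e2]

lemma cnt_S1 (x : ℕ) : cnt S1 (2 * x) = cnt P x := cnt_double P x
lemma cnt_S2 (x : ℕ) : cnt S2 (2 * x) = 2 * cnt Pb x := cnt_half Pb x
lemma cnt_S2_odd (x : ℕ) : cnt S2 (2 * x + 1) = 2 * cnt Pb x + if Pb x then 1 else 0 :=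
  cnt_half_odd Pb x
lemma cnt_S3 (x : ℕ) : cnt S3 (2 * x + 1) = cnt S2 x := cnt_odd S2 x

/-! ### Transfer of intertwining sequences under doubling -/

lemma inf_double {p : ℕ → Prop} (hinf : (setOf p).Infinite) :
    (setOf (fun j => ∃ s, j = 2 * s ∧ p s)).Infinite := by
  have : setOf (fun j => ∃ s, j = 2 * s ∧ p s) = (fun s => 2 * s) '' setOf p := by
    ext j; simp only [Set.mem_setOf_eq, Set.mem_image]
    constructor
    · rintro ⟨s, rfl, h⟩; exact ⟨s, h, rfl⟩
    · rintro ⟨s, h, rfl⟩; exact ⟨s, rfl, h⟩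
  rw [this]
  exact hinf.image (Set.injOn_of_injective (fun a b h => by omega))

lemma itw_double {i n : ℕ} (hn : 2 ≤ n) (hinf : (setOf (occSet i n)).Infinite) (m : ℕ) :
    itw (2 * i) (2 * n) m = itw i n m := by
  have hq : occSet (2 * i) (2 * n) = fun j => ∃ s, j = 2 * s ∧ occSet i n s := occ_double hn
  have hinf2 : (setOf (fun j => ∃ s, j = 2 * s ∧ occSet i n s)).Infinite := inf_double hinf
  unfold itw
  rw [hq]
  obtain ⟨s, hs, hocc⟩ :
      ∃ s, Nat.nth (fun j => ∃ s, j = 2 * s ∧ occSet i n s) m = 2 * s ∧ occSet i n s :=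
    Nat.nth_mem_of_infinite hinf2 m
  have hcnt := Nat.count_nth_of_infinite hinf2 m
  have hdc := cnt_double (occSet i n) s
  rw [cnt_eq_count, cnt_eq_count] at hdc
  rw [hs, hdc] at hcnt
  have hnth : Nat.nth (occSet i n) m = s := by rw [← hcnt]; exact Nat.nth_count hocc
  rw [hs, hnth]
  exact if_congr feq_double rfl rfl

lemma itw_double' {i n : ℕ} (hn : 2 ≤ n) (hinf : (setOf (occSet i (n + 1))).Infinite) (m : ℕ) :
    itw (2 * i) (2 * n + 1) m = itw i (n + 1) m := by
  have hq : occSet (2 * i) (2 * n + 1) = fun j => ∃ s, j = 2 * s ∧ occSet i (n + 1) s :=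
    occ_double' hn
  have hinf2 : (setOf (fun j => ∃ s, j = 2 * s ∧ occSet i (n + 1) s)).Infinite := inf_double hinf
  unfold itw
  rw [hq]
  obtain ⟨s, hs, hocc⟩ :
      ∃ s, Nat.nth (fun j => ∃ s, j = 2 * s ∧ occSet i (n + 1) s) m = 2 * s ∧ occSet i (n + 1) s :=
    Nat.nth_mem_of_infinite hinf2 m
  have hcnt := Nat.count_nth_of_infinite hinf2 m
  have hdc := cnt_double (occSet i (n + 1)) s
  rw [cnt_eq_count, cnt_eq_count] at hdc
  rw [hs, hdc] at hcnt
  have hnth : Nat.nth (occSet i (n + 1)) m = s := by rw [← hcnt]; exact Nat.nth_count hocc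
  rw [hs, hnth]
  exact if_congr feq_double' rfl rfl

/-! ### Small values -/

lemma P0 : P 0 := by unfold P; norm_num [tm]
lemma nP1 : ¬ P 1 := by unfold P; norm_num [tm]
lemma P2 : P 2 := by unfold P; norm_num [tm]
lemma P3 : P 3 := by unfold P; norm_num [tm]
lemma P4 : P 4 := by unfold P; norm_num [tm]
lemma nP5 : ¬ P 5 := by unfold P; norm_num [tm]
lemma P6 : P 6 := by unfold P; norm_num [tm]
lemma nP7 : ¬ P 7 := by unfold P; norm_num [tm]
lemma P8 : P 8 := by unfold P; norm_num [tm]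
lemma nP9 : ¬ P 9 := by unfold P; norm_num [tm]
lemma tm0 : tm 0 = 0 := by norm_num [tm]
lemma tm2 : tm 2 = 1 := by norm_num [tm]
lemma tm3 : tm 3 = 0 := by norm_num [tm]
lemma tm4 : tm 4 = 1 := by norm_num [tm]
lemma tm5 : tm 5 = 0 := by norm_num [tm]
lemma tm7 : tm 7 = 1 := by norm_num [tm]

/-! ### Short occurrence characterizations -/

lemma occ2_iff (i j : ℕ) : occSet i 2 j ↔ (P j ↔ P i) := by
  rw [occ_P (by norm_num)]
  constructor
  · rintro ⟨-, h⟩; simpa using h 0 (by norm_num)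
  · intro h
    refine ⟨by have := tm_le_one j; have := tm_le_one i; omega, ?_⟩
    intro k hk
    have hk0 : k = 0 := by omega
    subst hk0; simpa using h

lemma occ3_iff (i j : ℕ) : occSet i 3 j ↔ ((P j ↔ P i) ∧ (P (j + 1) ↔ P (i + 1))) := by
  rw [occ_P (by norm_num)]
  constructor
  · rintro ⟨-, h⟩
    exact ⟨by simpa using h 0 (by norm_num), by simpa using h 1 (by norm_num)⟩
  · intro h
    refine ⟨by have := tm_le_one j; have := tm_le_one i; omega, ?_⟩
    intro k hk
    rcases (show k = 0 ∨ k = 1 from by omega) with rfl | rfl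
    · simpa using h.1
    · simpa using h.2

lemma occ4_iff (i j : ℕ) : occSet i 4 j ↔
    ((P j ↔ P i) ∧ (P (j + 1) ↔ P (i + 1)) ∧ (P (j + 2) ↔ P (i + 2))) := by
  rw [occ_P (by norm_num)]
  constructor
  · rintro ⟨-, h⟩
    exact ⟨by simpa using h 0 (by norm_num), by simpa using h 1 (by norm_num),
      by simpa using h 2 (by norm_num)⟩
  · intro h
    refine ⟨by have := tm_le_one j; have := tm_le_one i; omega, ?_⟩
    intro k hk
    rcases (show k = 0 ∨ k = 1 ∨ k = 2 from by omega) with rfl | rfl | rfl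
    · simpa using h.1
    · simpa using h.2.1
    · simpa using h.2.2

/-! ### The occurrence sets of the base factors -/

lemma occ02 : occSet 0 2 = P := by
  funext j; apply propext
  rw [occ2_iff]
  exact ⟨fun h => h.mpr P0, fun h => iff_of_true h P0⟩

lemma occ22 : occSet 2 2 = P := by
  funext j; apply propext
  rw [occ2_iff]
  exact ⟨fun h => h.mpr P2, fun h => iff_of_true h P2⟩

lemma occ03 : occSet 0 3 = S1 := by
  funext j; apply propext
  rw [occ3_iff]
  unfold S1
  constructor
  · rintro ⟨h1, h2⟩
    have hPj : P j := h1.mpr P0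
    have hn : ¬ P (j + 1) := fun h => nP1 (h2.mp h)
    rcases Nat.even_or_odd j with ⟨s, hs⟩ | ⟨s, hs⟩
    · refine ⟨s, by omega, ?_⟩
      rw [show j + 1 = 2 * s + 1 from by omega, P_odd] at hn
      exact not_not.mp hn
    · exfalso
      apply hn
      rw [show j + 1 = 2 * (s + 1) from by omega]
      exact P_even (s + 1)
  · rintro ⟨s, rfl, hs⟩
    refine ⟨iff_of_true (P_even s) P0, iff_of_false ?_ nP1⟩
    rw [P_odd]
    exact not_not_intro hs

lemma occ43 : occSet 4 3 = S1 := by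
  rw [← occ03]
  funext j; apply propext
  rw [occ3_iff, occ3_iff]
  constructor
  · rintro ⟨h1, h2⟩
    exact ⟨⟨fun h => P0, fun _ => h1.mpr P4⟩,
      iff_of_false (fun h => nP5 (h2.mp h)) nP1⟩
  · rintro ⟨h1, h2⟩
    exact ⟨⟨fun h => P4, fun _ => h1.mpr P0⟩,
      iff_of_false (fun h => nP1 (h2.mp h)) nP5⟩

lemma S2_struct (j : ℕ) : (P j ∧ P (j + 1)) ↔ S2 j := by
  unfold S2 Pb
  rcases Nat.even_or_odd j with ⟨s, hs⟩ | ⟨s, hs⟩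
  · have e : j / 2 = s := by omega
    rw [e, show j = 2 * s from by omega, P_odd]
    exact ⟨fun h => h.2, fun h => ⟨P_even s, h⟩⟩
  · have e : j / 2 = s := by omega
    rw [e, show j = 2 * s + 1 from by omega, P_odd,
      show 2 * s + 1 + 1 = 2 * (s + 1) from by ring]
    exact ⟨fun h => h.1, fun h => ⟨h, P_even (s + 1)⟩⟩

lemma occ23 : occSet 2 3 = S2 := by
  funext j; apply propext
  rw [occ3_iff, ← S2_struct]
  constructor
  · rintro ⟨h1, h2⟩; exact ⟨h1.mpr P2, h2.mpr P3⟩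
  · rintro ⟨h1, h2⟩; exact ⟨iff_of_true h1 P2, iff_of_true h2 P3⟩

lemma occ33 : occSet 3 3 = S2 := by
  funext j; apply propext
  rw [occ3_iff, ← S2_struct]
  constructor
  · rintro ⟨h1, h2⟩; exact ⟨h1.mpr P3, h2.mpr P4⟩
  · rintro ⟨h1, h2⟩; exact ⟨iff_of_true h1 P3, iff_of_true h2 P4⟩

lemma occ54 : occSet 5 4 = S3 := by
  funext j; apply propext
  rw [occ4_iff]
  unfold S3
  constructor
  · rintro ⟨h1, h2, h3⟩
    have hn1 : ¬ P j := fun h => nP5 (h1.mp h)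
    have hp2 : P (j + 1) := h2.mpr P6
    have hn3 : ¬ P (j + 2) := fun h => nP7 (h3.mp h)
    have hodd := notP_odd hn1
    obtain ⟨x, rfl⟩ : ∃ x, j = 2 * x + 1 := ⟨j / 2, by omega⟩
    refine ⟨x, rfl, ?_⟩
    rw [← S2_struct]
    constructor
    · rw [P_odd] at hn1; exact not_not.mp hn1
    · rw [show 2 * x + 1 + 2 = 2 * (x + 1) + 1 from by ring, P_odd] at hn3
      exact not_not.mp hn3
  · rintro ⟨x, rfl, hx⟩
    rw [← S2_struct] at hx
    refine ⟨iff_of_false ?_ nP5, iff_of_true ?_ P6, iff_of_false ?_ nP7⟩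
    · rw [P_odd]; exact not_not_intro hx.1
    · rw [show 2 * x + 1 + 1 = 2 * (x + 1) from by ring]; exact P_even (x + 1)
    · rw [show 2 * x + 1 + 2 = 2 * (x + 1) + 1 from by ring, P_odd]
      exact not_not_intro hx.2

lemma occ74 : occSet 7 4 = S3 := by
  rw [← occ54]
  funext j; apply propext
  rw [occ4_iff, occ4_iff]
  constructor
  · rintro ⟨h1, h2, h3⟩
    exact ⟨iff_of_false (fun h => nP7 (h1.mp h)) nP5,
      iff_of_true (h2.mpr P8) P6,
      iff_of_false (fun h => nP9 (h3.mp h)) nP7⟩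
  · rintro ⟨h1, h2, h3⟩
    exact ⟨iff_of_false (fun h => nP5 (h1.mp h)) nP7,
      iff_of_true (h2.mpr P6) P8,
      iff_of_false (fun h => nP7 (h3.mp h)) nP9⟩

/-! ### Infinitude of the base occurrence sets -/

lemma infP : (setOf P).Infinite :=
  Set.infinite_of_injective_forall_mem (f := fun u => 2 * u)
    (fun a b h => by simp at h; omega) (fun u => P_even u)

lemma infS1 : (setOf S1).Infinite :=
  Set.infinite_of_injective_forall_mem (f := fun u => 2 * (2 * u))
    (fun a b h => by simp at h; omega) (fun u => ⟨2 * u, rfl, P_even u⟩)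

lemma infS2 : (setOf S2).Infinite :=
  Set.infinite_of_injective_forall_mem (f := fun u => 2 * (4 * u + 1))
    (fun a b h => by simp at h; omega)
    (fun u => by
      have e : 2 * (4 * u + 1) / 2 = 4 * u + 1 := by omega
      show Pb (2 * (4 * u + 1) / 2)
      rw [e]
      exact notP_4 u)

lemma infS3 : (setOf S3).Infinite :=
  Set.infinite_of_injective_forall_mem (f := fun u => 2 * (2 * (4 * u + 1)) + 1)
    (fun a b h => by simp at h; omega)
    (fun u => ⟨2 * (4 * u + 1), rfl, by
      show Pb (2 * (4 * u + 1) / 2)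
      have e : 2 * (4 * u + 1) / 2 = 4 * u + 1 := by omega
      rw [e]
      exact notP_4 u⟩)

/-! ### Labels as functions of the index -/

lemma S2_key {j : ℕ} (h : S2 j) :
    (tm j = 1 ↔ (cnt S2 j % 4 = 0 ∨ cnt S2 j % 4 = 3)) := by
  have hP : ¬ P (j / 2) := h
  have hodd : j / 2 % 2 = 1 := notP_odd hP
  have hcle := cnt_le P (j / 2)
  have htm := tm_eq_cnt (j / 2)
  have hnot := cnt_Pb (j / 2)
  rcases Nat.even_or_odd j with ⟨s, hs⟩ | ⟨s, hs⟩
  · have e : j / 2 = s := by omega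
    rw [e] at hodd hcle htm hnot
    have hcnt : cnt S2 j = 2 * cnt Pb s := by
      rw [show j = 2 * s from by omega]; exact cnt_S2 s
    have htmj : tm j = tm s := by rw [show j = 2 * s from by omega]; exact tm_even s
    rw [hcnt, hnot, htmj, htm]
    omega
  · have e : j / 2 = s := by omega
    rw [e] at hodd hcle htm hnot hP
    have hcnt : cnt S2 j = 2 * cnt Pb s + 1 := by
      rw [show j = 2 * s + 1 from by omega, cnt_S2_odd, if_pos (show Pb s from hP)]
    have htmj : tm j = 1 - tm s := by rw [show j = 2 * s + 1 from by omega]; exact tm_odd s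
    have hb := tm_le_one s
    rw [hcnt, hnot, htmj, htm]
    omega

lemma ite_flip {C : Prop} [Decidable C] [Decidable (¬ C)] {a b : ℕ} :
    (if ¬ C then a else b) = if C then b else a := by
  by_cases h : C
  · simp [h]
  · simp [h]

/-! ### The four base patterns -/

def gAB : ℕ → ℕ := fun m => m % 2
def gBA : ℕ → ℕ := fun m => (m + 1) % 2
noncomputable def gABBA : ℕ → ℕ := fun m => if m % 4 = 0 ∨ m % 4 = 3 then 0 else 1
noncomputable def gBAAB : ℕ → ℕ := fun m => if m % 4 = 0 ∨ m % 4 = 3 then 1 else 0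

lemma AB2 : ∀ m, itw 0 2 m = gAB m := by
  apply master gAB (by norm_num) P occ02 infP
  intro j _
  have := tm_eq_cnt j
  rw [tm0, this]
  unfold gAB
  by_cases h : cnt P j % 2 = 0
  · rw [if_pos h]; omega
  · rw [if_neg h]; omega

lemma BA2 : ∀ m, itw 2 2 m = gBA m := by
  apply master gBA (by norm_num) P occ22 infP
  intro j _
  have := tm_eq_cnt j
  rw [tm2, this]
  unfold gBA
  by_cases h : cnt P j % 2 = 1
  · rw [if_pos h]; omega
  · rw [if_neg h]; omega

lemma AB3 : ∀ m, itw 0 3 m = gAB m := by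
  apply master gAB (by norm_num) S1 occ03 infS1
  rintro j ⟨s, rfl, hs⟩
  rw [cnt_S1, tm0, tm_even, tm_eq_cnt]
  unfold gAB
  by_cases h : cnt P s % 2 = 0
  · rw [if_pos h]; omega
  · rw [if_neg h]; omega

lemma BA3 : ∀ m, itw 4 3 m = gBA m := by
  apply master gBA (by norm_num) S1 occ43 infS1
  rintro j ⟨s, rfl, hs⟩
  rw [cnt_S1, tm4, tm_even, tm_eq_cnt]
  unfold gBA
  by_cases h : cnt P s % 2 = 1
  · rw [if_pos h]; omega
  · rw [if_neg h]; omega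

lemma ABBA3 : ∀ m, itw 2 3 m = gABBA m := by
  apply master gABBA (by norm_num) S2 occ23 infS2
  intro j hj
  rw [tm2]
  unfold gABBA
  exact if_congr (S2_key hj) rfl rfl

lemma BAAB3 : ∀ m, itw 3 3 m = gBAAB m := by
  apply master gBAAB (by norm_num) S2 occ33 infS2
  intro j hj
  rw [tm3]
  unfold gBAAB
  have key := S2_key hj
  have hb := tm_le_one j
  have h2 : (tm j = 0) ↔ ¬ (cnt S2 j % 4 = 0 ∨ cnt S2 j % 4 = 3) := by omega
  exact (if_congr h2 rfl rfl).trans ite_flip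

lemma ABBA4 : ∀ m, itw 5 4 m = gABBA m := by
  apply master gABBA (by norm_num) S3 occ54 infS3
  rintro j ⟨x, rfl, hx⟩
  rw [cnt_S3, tm5]
  unfold gABBA
  have key := S2_key hx
  have hb := tm_le_one x
  have htmj := tm_odd x
  have h2 : (tm (2 * x + 1) = 0) ↔ (cnt S2 x % 4 = 0 ∨ cnt S2 x % 4 = 3) := by omega
  exact if_congr h2 rfl rfl

lemma BAAB4 : ∀ m, itw 7 4 m = gBAAB m := by
  apply master gBAAB (by norm_num) S3 occ74 infS3
  rintro j ⟨x, rfl, hx⟩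
  rw [cnt_S3, tm7]
  unfold gBAAB
  have key := S2_key hx
  have hb := tm_le_one x
  have htmj := tm_odd x
  have h2 : (tm (2 * x + 1) = 1) ↔ ¬ (cnt S2 x % 4 = 0 ∨ cnt S2 x % 4 = 3) := by omega
  exact (if_congr h2 rfl rfl).trans ite_flip

/-! ### The induction -/

/-- There is a length-`n` factor with intertwining sequence `g` and an infinite
occurrence set. -/
def Good (g : ℕ → ℕ) (n : ℕ) : Prop :=
  ∃ i, (setOf (occSet i n)).Infinite ∧ ∀ m, itw i n m = g m

lemma good_double {g : ℕ → ℕ} {n : ℕ} (hn : 2 ≤ n) (h : Good g n) : Good g (2 * n) := by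
  obtain ⟨i, hinf, hpat⟩ := h
  refine ⟨2 * i, ?_, fun m => (itw_double hn hinf m).trans (hpat m)⟩
  rw [occ_double hn]
  exact inf_double hinf

lemma good_double' {g : ℕ → ℕ} {n : ℕ} (hn : 2 ≤ n) (h : Good g (n + 1)) :
    Good g (2 * n + 1) := by
  obtain ⟨i, hinf, hpat⟩ := h
  refine ⟨2 * i, ?_, fun m => (itw_double' hn hinf m).trans (hpat m)⟩
  rw [occ_double' hn]
  exact inf_double hinf

def Q (n : ℕ) : Prop := Good gAB n ∧ Good gBA n ∧ Good gABBA n ∧ Good gBAAB n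

lemma Q2path : Good gAB 2 ∧ Good gBA 2 :=
  ⟨⟨0, by rw [occ02]; exact infP, AB2⟩, ⟨2, by rw [occ22]; exact infP, BA2⟩⟩

lemma Q3 : Q 3 :=
  ⟨⟨0, by rw [occ03]; exact infS1, AB3⟩,
   ⟨4, by rw [occ43]; exact infS1, BA3⟩,
   ⟨2, by rw [occ23]; exact infS2, ABBA3⟩,
   ⟨3, by rw [occ33]; exact infS2, BAAB3⟩⟩

lemma Q4 : Q 4 := by
  refine ⟨?_, ?_, ⟨5, by rw [occ54]; exact infS3, ABBA4⟩,
    ⟨7, by rw [occ74]; exact infS3, BAAB4⟩⟩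
  · have := good_double (n := 2) le_rfl Q2path.1
    simpa using this
  · have := good_double (n := 2) le_rfl Q2path.2
    simpa using this

lemma mainQ : ∀ n, 3 ≤ n → Q n := by
  intro n
  induction n using Nat.strong_induction_on with
  | _ n ih =>
    intro hn
    rcases (show n = 3 ∨ n = 4 ∨ 5 ≤ n from by omega) with rfl | rfl | h5
    · exact Q3
    · exact Q4
    · rcases Nat.even_or_odd n with ⟨m, hm⟩ | ⟨m, hm⟩
      · have hq := ih m (by omega) (by omega)
        rw [show n = 2 * m from by omega]
        exact ⟨good_double (by omega) hq.1, good_double (by omega) hq.2.1,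
          good_double (by omega) hq.2.2.1, good_double (by omega) hq.2.2.2⟩
      · have hq := ih (m + 1) (by omega) (by omega)
        rw [show n = 2 * m + 1 from by omega]
        exact ⟨good_double' (by omega) hq.1, good_double' (by omega) hq.2.1,
          good_double' (by omega) hq.2.2.1, good_double' (by omega) hq.2.2.2⟩

/-- For every n ≥ 3, each of the four patterns (AB)^ω, (BA)^ω, (ABBA)^ω,
(BAAB)^ω is the intertwining sequence of some length-n factor. -/
theorem tm_all_patterns_occur (n : ℕ) (hn : 3 ≤ n) :
    (∃ i, ABpat i n) ∧ (∃ j, BApat j n) ∧ (∃ k, ABBApat k n) ∧ (∃ l, BAABpat l n) := by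
  obtain ⟨⟨i1, _, h1⟩, ⟨i2, _, h2⟩, ⟨i3, _, h3⟩, ⟨i4, _, h4⟩⟩ := mainQ n hn
  exact ⟨⟨i1, fun m => h1 m⟩, ⟨i2, fun m => h2 m⟩, ⟨i3, fun m => h3 m⟩, ⟨i4, fun m => h4 m⟩⟩
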